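/- Let y₁, y₂, y₃, y₄ be C⁶ functions on [−1,1] with y₁ = 0 near −1 and (1−x²)² near 1; y₂ = (1−x²)² near −1 and 0 near 1; y₃ = 0 near −1 and 1−x² near 1; y₄ = 1−x² near −1 and 0 near 1. Then [yᵢ, yⱼ]_H = 0 for all i, j ∈ {1,2,3,4}, where [f,g]_H = [f,g]_K(1) − [f,g]_K(−1). -/

import Mathlib

open Set Filter Topology intervalIntegral

noncomputable def krallAlpha (A B : ℝ) : ℝ := 3*A + 3*B + 6

noncomputable def krallPi (A B : ℝ) (x : ℝ) : ℝ :=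
  (-6*A - 6*B - 12*A*B)*x^2 + (12*A - 12*B)*x + (12*A*B + 18*A + 18*B + 24)

/-- The sixth-order Krall differential expression, expanded form. -/
noncomputable def lK (A B : ℝ) (y : ℝ → ℝ) (x : ℝ) : ℝ :=
  (x^2 - 1)^3 * iteratedDeriv 6 y x
  + 18*x*(x^2 - 1)^2 * iteratedDeriv 5 y x
  + (x^2 - 1)*((3*A + 3*B + 96)*x^2 - 3*A - 3*B - 36) * iteratedDeriv 4 y x
  + (24*A + 24*B + 168)*x*(x^2 - 1) * iteratedDeriv 3 y x
  + ((12*A*B + 42*A + 42*B + 72)*x^2 + (12*B - 12*A)*x - 12*A*B - 30*A - 30*B - 72)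
      * iteratedDeriv 2 y x
  + ((24*A*B + 12*A + 12*B)*x + 12*B - 12*A) * deriv y x

/-- The sixth-order Krall differential expression, Lagrangian symmetric form. -/
noncomputable def lKsym (A B : ℝ) (y : ℝ → ℝ) (x : ℝ) : ℝ :=
  - iteratedDeriv 3 (fun t => (1 - t^2)^3 * iteratedDeriv 3 y t) x
  + iteratedDeriv 2 (fun t => (1 - t^2)*(12 + krallAlpha A B * (1 - t^2)) * iteratedDeriv 2 y t) x
  - deriv (fun t => krallPi A B t * deriv y t) x

/-- Λ[f](x) = −((1−x²)³f‴(x))′ + (1−x²)(12+α(1−x²))f″(x). -/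
noncomputable def LamK (A B : ℝ) (f : ℝ → ℝ) (x : ℝ) : ℝ :=
  - deriv (fun t => (1 - t^2)^3 * iteratedDeriv 3 f t) x
  + (1 - x^2)*(12 + krallAlpha A B * (1 - x^2)) * iteratedDeriv 2 f x

/-- [f,1]_K(x) = −((1−x²)³f‴)″ + ((1−x²)(12+α(1−x²))f″)′ − π(x)f′(x). -/
noncomputable def concOne (A B : ℝ) (f : ℝ → ℝ) (x : ℝ) : ℝ :=
  - iteratedDeriv 2 (fun t => (1 - t^2)^3 * iteratedDeriv 3 f t) x
  + deriv (fun t => (1 - t^2)*(12 + krallAlpha A B * (1 - t^2)) * iteratedDeriv 2 f t) x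
  - krallPi A B x * deriv f x

/-- The bilinear concomitant [f,g]_K of the Krall expression (real-valued case). -/
noncomputable def conc (A B : ℝ) (f g : ℝ → ℝ) (x : ℝ) : ℝ :=
  concOne A B f x * g x - concOne A B g x * f x
  - LamK A B f x * deriv g x + LamK A B g x * deriv f x
  - (1 - x^2)^3 * (iteratedDeriv 3 f x * iteratedDeriv 2 g x
      - iteratedDeriv 2 f x * iteratedDeriv 3 g x)

section KrallAux

private lemma kr_hasDerivAt_q (x : ℝ) : HasDerivAt (fun t : ℝ => 1 - t^2) (-(2*x)) x := by
  simpa using (hasDerivAt_pow 2 x).const_sub 1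

private lemma kr_deriv_Qf : deriv (fun t : ℝ => 1 - t^2) = fun x => -(2*x) :=
  deriv_eq kr_hasDerivAt_q

private lemma kr_iter2_Qf (x : ℝ) : iteratedDeriv 2 (fun t : ℝ => 1 - t^2) x = -2 := by
  rw [iteratedDeriv_succ, iteratedDeriv_one, kr_deriv_Qf]
  have h : HasDerivAt (fun x : ℝ => -(2*x)) (-2) x := by
    have h0 := ((hasDerivAt_id x).const_mul (2:ℝ)).neg
    simp only [mul_one] at h0
    exact h0
  exact h.deriv

private lemma kr_iter3_Qf (x : ℝ) : iteratedDeriv 3 (fun t : ℝ => 1 - t^2) x = 0 := by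
  rw [iteratedDeriv_succ, funext kr_iter2_Qf]
  exact deriv_const x (-2)

private lemma kr_hasDerivAt_P (x : ℝ) :
    HasDerivAt (fun t : ℝ => (1 - t^2)^2) (4*x^3 - 4*x) x := by
  have h := (kr_hasDerivAt_q x).pow 2
  exact h.congr_deriv (by norm_num <;> ring)

private lemma kr_deriv_Pf : deriv (fun t : ℝ => (1 - t^2)^2) = fun x => 4*x^3 - 4*x :=
  deriv_eq kr_hasDerivAt_P

private lemma kr_iter2_Pf (x : ℝ) :
    iteratedDeriv 2 (fun t : ℝ => (1 - t^2)^2) x = 12*x^2 - 4 := by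
  rw [iteratedDeriv_succ, iteratedDeriv_one, kr_deriv_Pf]
  have h : HasDerivAt (fun x : ℝ => 4*x^3 - 4*x) (12*x^2 - 4) x := by
    have := ((hasDerivAt_pow 3 x).const_mul (4:ℝ)).sub (((hasDerivAt_id x)).const_mul (4:ℝ))
    exact this.congr_deriv (by norm_num <;> ring)
  exact h.deriv

private lemma kr_hasDerivAt_aux4 (x : ℝ) : HasDerivAt (fun x : ℝ => 12*x^2 - 4) (24*x) x := by
  have := ((hasDerivAt_pow 2 x).const_mul (12:ℝ)).sub_const 4
  exact this.congr_deriv (by norm_num <;> ring)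

private lemma kr_iter3_Pf (x : ℝ) :
    iteratedDeriv 3 (fun t : ℝ => (1 - t^2)^2) x = 24*x := by
  rw [iteratedDeriv_succ, funext kr_iter2_Pf]
  exact (kr_hasDerivAt_aux4 x).deriv

private lemma kr_hasDerivAt_c1P (x : ℝ) :
    HasDerivAt (fun t : ℝ => (1 - t^2)^3 * (24*t))
      (24*(1-x^2)^3 - 144*x^2*(1-x^2)^2) x := by
  have h := ((kr_hasDerivAt_q x).pow 3).mul ((hasDerivAt_id x).const_mul (24:ℝ))
  exact h.congr_deriv (by norm_num <;> ring)

private lemma kr_deriv_c1P : deriv (fun t : ℝ => (1 - t^2)^3 * (24*t))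
    = fun x => 24*(1-x^2)^3 - 144*x^2*(1-x^2)^2 := deriv_eq kr_hasDerivAt_c1P

private lemma kr_iter2_c1P (x : ℝ) :
    iteratedDeriv 2 (fun t : ℝ => (1 - t^2)^3 * (24*t)) x
      = -432*x*(1-x^2)^2 + 576*x^3*(1-x^2) := by
  rw [iteratedDeriv_succ, iteratedDeriv_one, kr_deriv_c1P]
  have h : HasDerivAt (fun x : ℝ => 24*(1-x^2)^3 - 144*x^2*(1-x^2)^2)
      (-432*x*(1-x^2)^2 + 576*x^3*(1-x^2)) x := by
    have := (((kr_hasDerivAt_q x).pow 3).const_mul (24:ℝ)).sub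
      (((hasDerivAt_pow 2 x).const_mul (144:ℝ)).mul ((kr_hasDerivAt_q x).pow 2))
    exact this.congr_deriv (by norm_num <;> ring)
  exact h.deriv

private lemma kr_deriv_c2P (A B : ℝ) :
    deriv (fun t : ℝ => (1 - t^2)*(12 + krallAlpha A B * (1 - t^2))*(12*t^2 - 4))
      = fun x => ((-(2*x))*(12 + krallAlpha A B * (1-x^2))
          + (1-x^2)*(krallAlpha A B * (-(2*x))))*(12*x^2-4)
          + (1-x^2)*(12 + krallAlpha A B * (1-x^2))*(24*x) := by
  refine deriv_eq fun x => ?_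
  exact ((kr_hasDerivAt_q x).mul
    (((kr_hasDerivAt_q x).const_mul (krallAlpha A B)).const_add 12)).mul (kr_hasDerivAt_aux4 x)

private lemma kr_deriv_c2Q (A B : ℝ) :
    deriv (fun t : ℝ => (1 - t^2)*(12 + krallAlpha A B * (1 - t^2))*(-2))
      = fun x => ((-(2*x))*(12 + krallAlpha A B * (1-x^2))
          + (1-x^2)*(krallAlpha A B * (-(2*x))))*(-2) := by
  refine deriv_eq fun x => ?_
  exact ((kr_hasDerivAt_q x).mul
    (((kr_hasDerivAt_q x).const_mul (krallAlpha A B)).const_add 12)).mul_const (-2)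

private lemma kr_iteratedDeriv_zero_fun (n : ℕ) :
    iteratedDeriv n (fun _ : ℝ => (0:ℝ)) = fun _ => 0 := by
  induction n with
  | zero => rfl
  | succ n ih => rw [iteratedDeriv_succ, ih]; exact deriv_const' 0

/-- Explicit polynomial expression for [P,Q]_K with P = (1−x²)², Q = 1−x². -/
noncomputable def krallE (A B x : ℝ) : ℝ :=
  (1008 + 132*A + 132*B + 24*A*B)*x + (24*A - 24*B)*x^2
  + (-3024 - 420*A - 420*B - 72*A*B)*x^3 + (-48*A + 48*B)*x^4
  + (3024 + 444*A + 444*B + 72*A*B)*x^5 + (24*A - 24*B)*x^6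
  + (-1008 - 156*A - 156*B - 24*A*B)*x^7

private lemma kr_continuous_krallE (A B : ℝ) : Continuous (krallE A B) := by
  unfold krallE; fun_prop

private lemma kr_krallE_one (A B : ℝ) : krallE A B 1 = 0 := by simp only [krallE]; ring
private lemma kr_krallE_negone (A B : ℝ) : krallE A B (-1) = 0 := by simp only [krallE]; ring

private lemma kr_conc_P_Q (A B x : ℝ) :
    conc A B (fun s : ℝ => (1 - s^2)^2) (fun s : ℝ => 1 - s^2) x = krallE A B x := by
  simp only [conc, concOne, LamK, kr_iter2_Pf, kr_iter3_Pf, kr_iter2_Qf, kr_iter3_Qf,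
    kr_deriv_Pf, kr_deriv_Qf, mul_zero, kr_iter2_c1P, kr_deriv_c1P, kr_deriv_c2P, kr_deriv_c2Q,
    kr_iteratedDeriv_zero_fun, deriv_const']
  simp only [krallAlpha, krallPi, krallE]
  ring

private lemma kr_conc_antisymm (A B : ℝ) (f g : ℝ → ℝ) (x : ℝ) :
    conc A B g f x = -conc A B f g x := by simp only [conc]; ring

private lemma kr_conc_self (A B : ℝ) (f : ℝ → ℝ) (x : ℝ) : conc A B f f x = 0 := by
  simp only [conc]; ring

private lemma kr_conc_zero_right (A B : ℝ) (f : ℝ → ℝ) (x : ℝ) :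
    conc A B f (fun _ => 0) x = 0 := by
  simp [conc, concOne, LamK, kr_iteratedDeriv_zero_fun]

private lemma kr_conc_zero_left (A B : ℝ) (g : ℝ → ℝ) (x : ℝ) :
    conc A B (fun _ => 0) g x = 0 := by
  simp [conc, concOne, LamK, kr_iteratedDeriv_zero_fun]

private lemma kr_ev_iteratedDeriv {f g : ℝ → ℝ} {x : ℝ} (h : f =ᶠ[nhds x] g) (n : ℕ) :
    iteratedDeriv n f =ᶠ[nhds x] iteratedDeriv n g := by
  induction n with
  | zero => simpa [iteratedDeriv_zero] using h
  | succ n ih => simpa [iteratedDeriv_succ] using ih.deriv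

private lemma kr_conc_congr_pt {A B : ℝ} {u v p q : ℝ → ℝ} {x : ℝ}
    (hu : u =ᶠ[nhds x] p) (hv : v =ᶠ[nhds x] q) :
    conc A B u v x = conc A B p q x := by
  have e3u := kr_ev_iteratedDeriv hu 3
  have e2u := kr_ev_iteratedDeriv hu 2
  have e3v := kr_ev_iteratedDeriv hv 3
  have e2v := kr_ev_iteratedDeriv hv 2
  have c1u : (fun t => (1 - t^2)^3 * iteratedDeriv 3 u t)
      =ᶠ[nhds x] (fun t => (1 - t^2)^3 * iteratedDeriv 3 p t) :=
    e3u.mono fun t ht => by simp only [ht]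
  have c1v : (fun t => (1 - t^2)^3 * iteratedDeriv 3 v t)
      =ᶠ[nhds x] (fun t => (1 - t^2)^3 * iteratedDeriv 3 q t) :=
    e3v.mono fun t ht => by simp only [ht]
  have c2u : (fun t => (1 - t^2)*(12 + krallAlpha A B * (1 - t^2)) * iteratedDeriv 2 u t)
      =ᶠ[nhds x] (fun t => (1 - t^2)*(12 + krallAlpha A B * (1 - t^2)) * iteratedDeriv 2 p t) :=
    e2u.mono fun t ht => by simp only [ht]
  have c2v : (fun t => (1 - t^2)*(12 + krallAlpha A B * (1 - t^2)) * iteratedDeriv 2 v t)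
      =ᶠ[nhds x] (fun t => (1 - t^2)*(12 + krallAlpha A B * (1 - t^2)) * iteratedDeriv 2 q t) :=
    e2v.mono fun t ht => by simp only [ht]
  simp only [conc, concOne, LamK]
  rw [(kr_ev_iteratedDeriv c1u 2).eq_of_nhds, (kr_ev_iteratedDeriv c1v 2).eq_of_nhds,
    c1u.deriv_eq, c1v.deriv_eq, c2u.deriv_eq, c2v.deriv_eq,
    e3u.eq_of_nhds, e3v.eq_of_nhds, e2u.eq_of_nhds, e2v.eq_of_nhds,
    hu.deriv_eq, hv.deriv_eq, hu.eq_of_nhds, hv.eq_of_nhds]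

private lemma kr_end_tendsto (A B : ℝ) {u v p q F : ℝ → ℝ} {a L : ℝ} {s : Set ℝ}
    (hs : IsOpen s) (hu : ∀ x ∈ s, u x = p x) (hv : ∀ x ∈ s, v x = q x)
    (hmem : ∀ᶠ t in nhdsWithin a (Set.Ioo (-1:ℝ) 1), t ∈ s)
    (hF : ∀ x, conc A B p q x = F x) (hc : ContinuousAt F a) (hL : F a = L) :
    Filter.Tendsto (conc A B u v) (nhdsWithin a (Set.Ioo (-1:ℝ) 1)) (nhds L) := by
  have hFt : Filter.Tendsto F (nhdsWithin a (Set.Ioo (-1:ℝ) 1)) (nhds L) :=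
    hL ▸ hc.tendsto.mono_left nhdsWithin_le_nhds
  refine Filter.Tendsto.congr' ?_ hFt
  filter_upwards [hmem] with t ht
  have hup : u =ᶠ[nhds t] p := Filter.eventually_of_mem (hs.mem_nhds ht) hu
  have hvq : v =ᶠ[nhds t] q := Filter.eventually_of_mem (hs.mem_nhds ht) hv
  rw [← hF t, kr_conc_congr_pt hup hvq]

end KrallAux

/-- the functions y₁, y₂, y₃, y₄ satisfy the symmetry conditions
[yᵢ,yⱼ]_H = 0, where [f,g]_H = [f,g]_K(1) − [f,g]_K(−1) (limits at the endpoints). -/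
theorem krall_gkn_set_symmetry (A B : ℝ) (hA : 0 < A) (hB : 0 < B)
    (y₁ y₂ y₃ y₄ : ℝ → ℝ)
    (h₁ : ContDiffOn ℝ 6 y₁ (Set.Ioo (-1 : ℝ) 1))
    (h₂ : ContDiffOn ℝ 6 y₂ (Set.Ioo (-1 : ℝ) 1))
    (h₃ : ContDiffOn ℝ 6 y₃ (Set.Ioo (-1 : ℝ) 1))
    (h₄ : ContDiffOn ℝ 6 y₄ (Set.Ioo (-1 : ℝ) 1))
    (ε : ℝ) (hε : 0 < ε)
    (h₁l : ∀ x ∈ Set.Ioo (-1 : ℝ) (-1 + ε), y₁ x = 0)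
    (h₁r : ∀ x ∈ Set.Ioo (1 - ε : ℝ) 1, y₁ x = (1 - x^2)^2)
    (h₂l : ∀ x ∈ Set.Ioo (-1 : ℝ) (-1 + ε), y₂ x = (1 - x^2)^2)
    (h₂r : ∀ x ∈ Set.Ioo (1 - ε : ℝ) 1, y₂ x = 0)
    (h₃l : ∀ x ∈ Set.Ioo (-1 : ℝ) (-1 + ε), y₃ x = 0)
    (h₃r : ∀ x ∈ Set.Ioo (1 - ε : ℝ) 1, y₃ x = 1 - x^2)
    (h₄l : ∀ x ∈ Set.Ioo (-1 : ℝ) (-1 + ε), y₄ x = 1 - x^2)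
    (h₄r : ∀ x ∈ Set.Ioo (1 - ε : ℝ) 1, y₄ x = 0) :
    ∀ u ∈ ({y₁, y₂, y₃, y₄} : Set (ℝ → ℝ)), ∀ v ∈ ({y₁, y₂, y₃, y₄} : Set (ℝ → ℝ)),
      ∃ L₁ L₂ : ℝ,
        Filter.Tendsto (conc A B u v) (nhdsWithin 1 (Set.Ioo (-1 : ℝ) 1)) (nhds L₁) ∧
        Filter.Tendsto (conc A B u v) (nhdsWithin (-1) (Set.Ioo (-1 : ℝ) 1)) (nhds L₂) ∧
        L₁ - L₂ = 0 := by
  intro u hu v hv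
  simp only [Set.mem_insert_iff, Set.mem_singleton_iff] at hu hv
  have memR : ∀ᶠ t in nhdsWithin (1:ℝ) (Set.Ioo (-1:ℝ) 1), t ∈ Set.Ioo (1-ε:ℝ) 1 := by
    filter_upwards [nhdsWithin_le_nhds (Ioi_mem_nhds (by linarith : (1:ℝ)-ε < 1)),
      self_mem_nhdsWithin] with t h1 h2
    exact ⟨h1, h2.2⟩
  have memL : ∀ᶠ t in nhdsWithin (-1:ℝ) (Set.Ioo (-1:ℝ) 1), t ∈ Set.Ioo (-1:ℝ) (-1+ε) := by
    filter_upwards [nhdsWithin_le_nhds (Iio_mem_nhds (by linarith : (-1:ℝ) < -1+ε)),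
      self_mem_nhdsWithin] with t h1 h2
    exact ⟨h2.1, h1⟩
  have tzRv : ∀ u v : ℝ → ℝ, (∀ x ∈ Set.Ioo (1-ε:ℝ) 1, v x = 0) →
      Filter.Tendsto (conc A B u v) (nhdsWithin 1 (Set.Ioo (-1:ℝ) 1)) (nhds 0) :=
    fun u v hv => kr_end_tendsto A B isOpen_Ioo (fun x _ => rfl) hv memR
      (fun x => kr_conc_zero_right A B u x) continuousAt_const rfl
  have tzRu : ∀ u v : ℝ → ℝ, (∀ x ∈ Set.Ioo (1-ε:ℝ) 1, u x = 0) →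
      Filter.Tendsto (conc A B u v) (nhdsWithin 1 (Set.Ioo (-1:ℝ) 1)) (nhds 0) :=
    fun u v hu => kr_end_tendsto A B isOpen_Ioo hu (fun x _ => rfl) memR
      (fun x => kr_conc_zero_left A B v x) continuousAt_const rfl
  have tzLv : ∀ u v : ℝ → ℝ, (∀ x ∈ Set.Ioo (-1:ℝ) (-1+ε), v x = 0) →
      Filter.Tendsto (conc A B u v) (nhdsWithin (-1) (Set.Ioo (-1:ℝ) 1)) (nhds 0) :=
    fun u v hv => kr_end_tendsto A B isOpen_Ioo (fun x _ => rfl) hv memL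
      (fun x => kr_conc_zero_right A B u x) continuousAt_const rfl
  have tzLu : ∀ u v : ℝ → ℝ, (∀ x ∈ Set.Ioo (-1:ℝ) (-1+ε), u x = 0) →
      Filter.Tendsto (conc A B u v) (nhdsWithin (-1) (Set.Ioo (-1:ℝ) 1)) (nhds 0) :=
    fun u v hu => kr_end_tendsto A B isOpen_Ioo hu (fun x _ => rfl) memL
      (fun x => kr_conc_zero_left A B v x) continuousAt_const rfl
  have tER : ∀ u v : ℝ → ℝ, (∀ x ∈ Set.Ioo (1-ε:ℝ) 1, u x = (1-x^2)^2) →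
      (∀ x ∈ Set.Ioo (1-ε:ℝ) 1, v x = 1-x^2) →
      Filter.Tendsto (conc A B u v) (nhdsWithin 1 (Set.Ioo (-1:ℝ) 1)) (nhds 0) :=
    fun u v hu hv => kr_end_tendsto A B isOpen_Ioo hu hv memR (kr_conc_P_Q A B)
      (kr_continuous_krallE A B).continuousAt (kr_krallE_one A B)
  have tER' : ∀ u v : ℝ → ℝ, (∀ x ∈ Set.Ioo (1-ε:ℝ) 1, u x = 1-x^2) →
      (∀ x ∈ Set.Ioo (1-ε:ℝ) 1, v x = (1-x^2)^2) →
      Filter.Tendsto (conc A B u v) (nhdsWithin 1 (Set.Ioo (-1:ℝ) 1)) (nhds 0) :=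
    fun u v hu hv => kr_end_tendsto A B isOpen_Ioo hu hv memR
      (fun x => by rw [kr_conc_antisymm, kr_conc_P_Q]; rfl)
      ((kr_continuous_krallE A B).neg).continuousAt
      (by rw [Pi.neg_apply, kr_krallE_one]; ring)
  have tEL : ∀ u v : ℝ → ℝ, (∀ x ∈ Set.Ioo (-1:ℝ) (-1+ε), u x = (1-x^2)^2) →
      (∀ x ∈ Set.Ioo (-1:ℝ) (-1+ε), v x = 1-x^2) →
      Filter.Tendsto (conc A B u v) (nhdsWithin (-1) (Set.Ioo (-1:ℝ) 1)) (nhds 0) :=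
    fun u v hu hv => kr_end_tendsto A B isOpen_Ioo hu hv memL (kr_conc_P_Q A B)
      (kr_continuous_krallE A B).continuousAt (kr_krallE_negone A B)
  have tEL' : ∀ u v : ℝ → ℝ, (∀ x ∈ Set.Ioo (-1:ℝ) (-1+ε), u x = 1-x^2) →
      (∀ x ∈ Set.Ioo (-1:ℝ) (-1+ε), v x = (1-x^2)^2) →
      Filter.Tendsto (conc A B u v) (nhdsWithin (-1) (Set.Ioo (-1:ℝ) 1)) (nhds 0) :=
    fun u v hu hv => kr_end_tendsto A B isOpen_Ioo hu hv memL
      (fun x => by rw [kr_conc_antisymm, kr_conc_P_Q]; rfl)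
      ((kr_continuous_krallE A B).neg).continuousAt
      (by rw [Pi.neg_apply, kr_krallE_negone]; ring)
  have tdiag : ∀ (w : ℝ → ℝ) (a : ℝ),
      Filter.Tendsto (conc A B w w) (nhdsWithin a (Set.Ioo (-1:ℝ) 1)) (nhds 0) := by
    intro w a
    have h : conc A B w w = fun _ => 0 := funext (kr_conc_self A B w)
    rw [h]; exact tendsto_const_nhds
  rcases hu with h | h | h | h <;> rcases hv with h' | h' | h' | h' <;> rw [h, h']
  · exact ⟨0, 0, tdiag y₁ 1, tdiag y₁ (-1), by ring⟩
  · exact ⟨0, 0, tzRv y₁ y₂ h₂r, tzLu y₁ y₂ h₁l, by ring⟩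
  · exact ⟨0, 0, tER y₁ y₃ h₁r h₃r, tzLu y₁ y₃ h₁l, by ring⟩
  · exact ⟨0, 0, tzRv y₁ y₄ h₄r, tzLu y₁ y₄ h₁l, by ring⟩
  · exact ⟨0, 0, tzRu y₂ y₁ h₂r, tzLv y₂ y₁ h₁l, by ring⟩
  · exact ⟨0, 0, tdiag y₂ 1, tdiag y₂ (-1), by ring⟩
  · exact ⟨0, 0, tzRu y₂ y₃ h₂r, tzLv y₂ y₃ h₃l, by ring⟩
  · exact ⟨0, 0, tzRu y₂ y₄ h₂r, tEL y₂ y₄ h₂l h₄l, by ring⟩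
  · exact ⟨0, 0, tER' y₃ y₁ h₃r h₁r, tzLu y₃ y₁ h₃l, by ring⟩
  · exact ⟨0, 0, tzRv y₃ y₂ h₂r, tzLu y₃ y₂ h₃l, by ring⟩
  · exact ⟨0, 0, tdiag y₃ 1, tdiag y₃ (-1), by ring⟩
  · exact ⟨0, 0, tzRv y₃ y₄ h₄r, tzLu y₃ y₄ h₃l, by ring⟩
  · exact ⟨0, 0, tzRu y₄ y₁ h₄r, tzLv y₄ y₁ h₁l, by ring⟩
  · exact ⟨0, 0, tzRu y₄ y₂ h₄r, tEL' y₄ y₂ h₄l h₂l, by ring⟩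
  · exact ⟨0, 0, tzRu y₄ y₃ h₄r, tzLv y₄ y₃ h₃l, by ring⟩
  · exact ⟨0, 0, tdiag y₄ 1, tdiag y₄ (-1), by ring⟩
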